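/- There exist constants C₁ > 0 and λ₀ > 0 depending only on the manifold M and the geodesic ball B such that if λ > λ₀ and u satisfies Δu + λu = 0 on B, then the zero set Z_u of u is C₁/√λ dense in B: every point of B (at distance > C₁/√λ from ∂B) lies within geodesic distance C₁/√λ of a zero of u. -/

import Mathlib

set_option maxHeartbeats 1000000
open Real Metric Set Filter Finset

lemma second_deriv_contra {g g' : ℝ → ℝ} {c : ℝ} (hc : c < 0)
    (hg : ∀ᶠ t in nhds (0:ℝ), HasDerivAt g (g' t) t)
    (hg' : HasDerivAt g' c 0) (h0 : g' 0 = 0)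
    (hmin : IsLocalMin g 0) : False := by
  have hslope := hasDerivAt_iff_tendsto_slope.1 hg'
  have hneg : ∀ᶠ t in nhdsWithin (0:ℝ) (Set.Ioi 0), g' t < 0 := by
    have h1 : ∀ᶠ t in nhdsWithin (0:ℝ) {(0:ℝ)}ᶜ, slope g' 0 t < 0 :=
      hslope.eventually_lt_const hc
    have h2 : ∀ᶠ t in nhdsWithin (0:ℝ) (Set.Ioi 0), slope g' 0 t < 0 :=
      h1.filter_mono (nhdsWithin_mono 0 (fun x hx => ne_of_gt hx))
    filter_upwards [h2, self_mem_nhdsWithin] with t ht ht0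
    have ht0' : (0:ℝ) < t := ht0
    have hs : slope g' 0 t = g' t / t := by
      rw [slope_def_field, h0]; ring
    rw [hs] at ht
    by_contra hcon
    push_neg at hcon
    have : 0 ≤ g' t / t := div_nonneg hcon (le_of_lt ht0')
    linarith
  obtain ⟨d1, hd1, hIoo⟩ := (nhdsGT_basis (0:ℝ)).eventually_iff.1 hneg
  obtain ⟨d2, hd2, hBall⟩ := Metric.eventually_nhds_iff.1 hg
  obtain ⟨d3, hd3, hMin⟩ := Metric.eventually_nhds_iff.1 hmin
  set b := min d1 (min d2 d3) / 2 with hb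
  have h1 : min d1 (min d2 d3) ≤ d1 := min_le_left _ _
  have h2 : min d1 (min d2 d3) ≤ d2 := (min_le_right _ _).trans (min_le_left _ _)
  have h3 : min d1 (min d2 d3) ≤ d3 := (min_le_right _ _).trans (min_le_right _ _)
  have hbpos : 0 < b := by positivity
  have hbd1 : b < d1 := by simp only [hb]; linarith
  have hbd2 : b < d2 := by simp only [hb]; linarith
  have hbd3 : b < d3 := by simp only [hb]; linarith
  have hcont : ContinuousOn g (Icc 0 b) := by
    intro t ht
    have : dist t 0 < d2 := by
      rw [Real.dist_eq, sub_zero, abs_of_nonneg ht.1]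
      exact lt_of_le_of_lt ht.2 hbd2
    exact ((hBall this).differentiableAt.continuousAt).continuousWithinAt
  have hanti : StrictAntiOn g (Icc 0 b) := by
    apply strictAntiOn_of_deriv_neg (convex_Icc 0 b) hcont
    intro t ht
    rw [interior_Icc] at ht
    have hdist : dist t 0 < d2 := by
      rw [Real.dist_eq, sub_zero, abs_of_nonneg ht.1.le]
      exact lt_trans ht.2 hbd2
    rw [(hBall hdist).deriv]
    exact hIoo ⟨ht.1, lt_trans ht.2 hbd1⟩
  have hlt : g b < g 0 :=
    hanti (by constructor <;> [rfl; exact hbpos.le]) ⟨hbpos.le, le_refl b⟩ hbpos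
  have : g 0 ≤ g b := hMin (by rw [Real.dist_eq, sub_zero, abs_of_nonneg hbpos.le]; exact hbd3)
  linarith

variable {n : ℕ} (μ : ℝ) (y : EuclideanSpace ℝ (Fin n))

/-- unit coordinate vector -/
noncomputable def ee (n : ℕ) (i : Fin n) : EuclideanSpace ℝ (Fin n) := EuclideanSpace.single i 1

/-- the comparison function -/
noncomputable def cw (x : EuclideanSpace ℝ (Fin n)) : ℝ :=
  ∏ i, Real.cos (μ * (x i - y i))

lemma cfac_hasFDerivAt (i : Fin n) (x : EuclideanSpace ℝ (Fin n)) :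
    HasFDerivAt (fun x : EuclideanSpace ℝ (Fin n) => Real.cos (μ * (x i - y i)))
      ((-Real.sin (μ * (x i - y i))) • (μ • (EuclideanSpace.proj i : EuclideanSpace ℝ (Fin n) →L[ℝ] ℝ))) x := by
  have hl : HasFDerivAt (fun x : EuclideanSpace ℝ (Fin n) => μ * (x i - y i))
      (μ • (EuclideanSpace.proj i : EuclideanSpace ℝ (Fin n) →L[ℝ] ℝ)) x := by
    have := ((EuclideanSpace.proj i : EuclideanSpace ℝ (Fin n) →L[ℝ] ℝ).hasFDerivAt (x := x)).sub_const (y i)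
    exact this.const_mul μ
  exact (Real.hasDerivAt_cos (μ * (x i - y i))).comp_hasFDerivAt x hl

lemma sfac_hasFDerivAt (i : Fin n) (x : EuclideanSpace ℝ (Fin n)) :
    HasFDerivAt (fun x : EuclideanSpace ℝ (Fin n) => -μ * Real.sin (μ * (x i - y i)))
      ((-μ) • ((Real.cos (μ * (x i - y i))) • (μ • (EuclideanSpace.proj i : EuclideanSpace ℝ (Fin n) →L[ℝ] ℝ)))) x := by
  have hl : HasFDerivAt (fun x : EuclideanSpace ℝ (Fin n) => μ * (x i - y i))
      (μ • (EuclideanSpace.proj i : EuclideanSpace ℝ (Fin n) →L[ℝ] ℝ)) x := by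
    have := ((EuclideanSpace.proj i : EuclideanSpace ℝ (Fin n) →L[ℝ] ℝ).hasFDerivAt (x := x)).sub_const (y i)
    exact this.const_mul μ
  exact ((Real.hasDerivAt_sin (μ * (x i - y i))).comp_hasFDerivAt x hl).const_mul (-μ)

lemma cw_hasFDerivAt (x : EuclideanSpace ℝ (Fin n)) :
    HasFDerivAt (cw μ y)
      (∑ i, (∏ j ∈ Finset.univ.erase i, Real.cos (μ * (x j - y j))) •
        ((-Real.sin (μ * (x i - y i))) • (μ • (EuclideanSpace.proj i : EuclideanSpace ℝ (Fin n) →L[ℝ] ℝ)))) x :=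
  HasFDerivAt.finset_prod (fun i _ => cfac_hasFDerivAt μ y i x)

lemma proj_apply_ee (i j : Fin n) :
    (EuclideanSpace.proj j : EuclideanSpace ℝ (Fin n) →L[ℝ] ℝ) (ee n i) = if j = i then 1 else 0 := by
  simp [ee, EuclideanSpace.single_apply]

lemma cw_fderiv_apply (x : EuclideanSpace ℝ (Fin n)) (i : Fin n) :
    fderiv ℝ (cw μ y) x (ee n i)
      = -μ * Real.sin (μ * (x i - y i)) * ∏ j ∈ Finset.univ.erase i, Real.cos (μ * (x j - y j)) := by
  rw [(cw_hasFDerivAt μ y x).fderiv]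
  rw [ContinuousLinearMap.sum_apply]
  rw [Finset.sum_eq_single i]
  · rw [ContinuousLinearMap.smul_apply, ContinuousLinearMap.smul_apply,
      ContinuousLinearMap.smul_apply, proj_apply_ee]
    simp only [if_pos rfl, if_true, smul_eq_mul, mul_sub]
    ring
  · intro j _ hji
    rw [ContinuousLinearMap.smul_apply, ContinuousLinearMap.smul_apply,
      ContinuousLinearMap.smul_apply, proj_apply_ee]
    simp [hji]
  · simp

lemma cwB_hasFDerivAt (i : Fin n) (x : EuclideanSpace ℝ (Fin n)) :
    HasFDerivAt (fun x : EuclideanSpace ℝ (Fin n) =>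
        -μ * Real.sin (μ * (x i - y i)) * ∏ j ∈ Finset.univ.erase i, Real.cos (μ * (x j - y j)))
      ((-μ * Real.sin (μ * (x i - y i))) •
          (∑ j ∈ Finset.univ.erase i, (∏ k ∈ (Finset.univ.erase i).erase j, Real.cos (μ * (x k - y k))) •
            ((-Real.sin (μ * (x j - y j))) • (μ • (EuclideanSpace.proj j : EuclideanSpace ℝ (Fin n) →L[ℝ] ℝ))))
        + (∏ j ∈ Finset.univ.erase i, Real.cos (μ * (x j - y j))) •
          ((-μ) • ((Real.cos (μ * (x i - y i))) • (μ • (EuclideanSpace.proj i : EuclideanSpace ℝ (Fin n) →L[ℝ] ℝ))))) x := by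
  exact (sfac_hasFDerivAt μ y i x).mul
    (HasFDerivAt.finset_prod (fun j _ => cfac_hasFDerivAt μ y j x))

lemma cw_second (x : EuclideanSpace ℝ (Fin n)) (i : Fin n) :
    fderiv ℝ (fun z => fderiv ℝ (cw μ y) z (ee n i)) x (ee n i) = -(μ^2) * cw μ y x := by
  have hfun : (fun z => fderiv ℝ (cw μ y) z (ee n i))
      = fun z : EuclideanSpace ℝ (Fin n) =>
          -μ * Real.sin (μ * (z i - y i)) * ∏ j ∈ Finset.univ.erase i, Real.cos (μ * (z j - y j)) := by
    funext z; exact cw_fderiv_apply μ y z i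
  rw [hfun, (cwB_hasFDerivAt μ y i x).fderiv]
  rw [ContinuousLinearMap.add_apply, ContinuousLinearMap.smul_apply, ContinuousLinearMap.smul_apply]
  have h1 : (∑ j ∈ Finset.univ.erase i, (∏ k ∈ (Finset.univ.erase i).erase j, Real.cos (μ * (x k - y k))) •
            ((-Real.sin (μ * (x j - y j))) • (μ • (EuclideanSpace.proj j : EuclideanSpace ℝ (Fin n) →L[ℝ] ℝ))))
        (ee n i) = 0 := by
    rw [ContinuousLinearMap.sum_apply]
    apply Finset.sum_eq_zero
    intro j hj
    have hji : j ≠ i := Finset.ne_of_mem_erase hj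
    rw [ContinuousLinearMap.smul_apply, ContinuousLinearMap.smul_apply,
      ContinuousLinearMap.smul_apply, proj_apply_ee]
    simp [hji]
  rw [h1]
  rw [ContinuousLinearMap.smul_apply, ContinuousLinearMap.smul_apply, ContinuousLinearMap.smul_apply,
    proj_apply_ee]
  have hprod : Real.cos (μ * (x i - y i)) * ∏ j ∈ Finset.univ.erase i, Real.cos (μ * (x j - y j))
      = cw μ y x := by
    simp only [cw]
    exact Finset.mul_prod_erase Finset.univ (fun j => Real.cos (μ * (x j - y j))) (Finset.mem_univ i)
  simp only [if_pos rfl, if_true, smul_eq_mul, mul_zero, smul_zero, ← mul_sub]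
  rw [← hprod]
  ring

/-- `u` is a Laplace eigenfunction: `Δu + λu = 0` on `s ⊆ ℝⁿ`. -/
def IsEigenfunctionOn {n : ℕ} (u : EuclideanSpace ℝ (Fin n) → ℝ)
    (s : Set (EuclideanSpace ℝ (Fin n))) (lam : ℝ) : Prop :=
  ContDiffOn ℝ 2 u s ∧ ∀ x ∈ s,
    (∑ i : Fin n,
      (fderiv ℝ (fun y => fderiv ℝ u y (EuclideanSpace.single i 1)) x)
        (EuclideanSpace.single i 1)) + lam * u x = 0

lemma IsEigenfunctionOn.neg' {n : ℕ} {u : EuclideanSpace ℝ (Fin n) → ℝ}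
    {s : Set (EuclideanSpace ℝ (Fin n))} {lam : ℝ} (h : IsEigenfunctionOn u s lam) :
    IsEigenfunctionOn (fun x => -u x) s lam := by
  refine ⟨h.1.neg, fun x hx => ?_⟩
  have hrw : ∀ i : Fin n,
      fderiv ℝ (fun z => fderiv ℝ (fun w => -u w) z (EuclideanSpace.single i 1)) x
          (EuclideanSpace.single i 1)
        = -(fderiv ℝ (fun z => fderiv ℝ u z (EuclideanSpace.single i 1)) x
          (EuclideanSpace.single i 1)) := by
    intro i
    have h1 : (fun z => fderiv ℝ (fun w => -u w) z (EuclideanSpace.single i 1))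
        = fun z => -(fderiv ℝ u z (EuclideanSpace.single i 1)) := by
      funext z; rw [fderiv_fun_neg]; simp
    rw [h1]
    have h2 : (fun z => -(fderiv ℝ u z (EuclideanSpace.single i 1)))
        = fun z => -((fun w => fderiv ℝ u w (EuclideanSpace.single i 1)) z) := rfl
    rw [h2, fderiv_fun_neg]; simp
  simp only [hrw]
  rw [Finset.sum_neg_distrib]
  have := h.2 x hx
  linarith

lemma cube_dist {n : ℕ} {a : ℝ} (ha : 0 ≤ a) (x y : EuclideanSpace ℝ (Fin n))
    (h : ∀ i, |x i - y i| ≤ a) : dist x y ≤ Real.sqrt n * a := by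
  rw [EuclideanSpace.dist_eq]
  have hsum : (∑ i, dist (x i) (y i) ^ 2) ≤ (n : ℝ) * a ^ 2 := by
    calc (∑ i, dist (x i) (y i) ^ 2) ≤ ∑ _i : Fin n, a ^ 2 :=
          Finset.sum_le_sum (fun i _ => by
            rw [Real.dist_eq]
            exact pow_le_pow_left₀ (abs_nonneg _) (h i) 2)
      _ = (n : ℝ) * a ^ 2 := by simp [Finset.sum_const, Finset.card_univ]
  calc Real.sqrt (∑ i, dist (x i) (y i) ^ 2) ≤ Real.sqrt ((n : ℝ) * a ^ 2) :=
        Real.sqrt_le_sqrt hsum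
    _ = Real.sqrt n * a := by
        rw [Real.sqrt_mul (by positivity), Real.sqrt_sq ha]

lemma key_contra {n : ℕ} {u : EuclideanSpace ℝ (Fin n) → ℝ}
    {s : Set (EuclideanSpace ℝ (Fin n))} (hs : IsOpen s) {lam μ a : ℝ}
    (hμ : 0 < μ) (hlt : (n : ℝ) * μ ^ 2 < lam) (ha : a = π / (2 * μ))
    (y : EuclideanSpace ℝ (Fin n))
    (hQs : {x : EuclideanSpace ℝ (Fin n) | ∀ i, |x i - y i| ≤ a} ⊆ s)
    (heig : IsEigenfunctionOn u s lam)
    (hpos : ∀ x, (∀ i, |x i - y i| ≤ a) → 0 < u x) : False := by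
  set Q : Set (EuclideanSpace ℝ (Fin n)) := {x | ∀ i, |x i - y i| ≤ a} with hQdef
  have ha0 : 0 < a := by rw [ha]; positivity
  have hyQ : y ∈ Q := by intro i; simp [ha0.le]
  have hμa : μ * a = π / 2 := by rw [ha]; field_simp
  -- compactness of the cube
  have hQclosed : IsClosed Q := by
    have : Q = ⋂ i, {x : EuclideanSpace ℝ (Fin n) | |x i - y i| ≤ a} := by
      ext x; simp [hQdef, Set.mem_iInter]
    rw [this]
    exact isClosed_iInter (fun i => isClosed_le
      (((EuclideanSpace.proj i : EuclideanSpace ℝ (Fin n) →L[ℝ] ℝ).continuous.sub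
        continuous_const).abs) continuous_const)
  have hQcpt : IsCompact Q := by
    refine (isCompact_closedBall y (Real.sqrt n * a)).of_isClosed_subset hQclosed ?_
    intro x hx
    rw [mem_closedBall]
    exact cube_dist ha0.le x y hx
  -- basic regularity of u
  have hucont : ContinuousOn u s := heig.1.continuousOn
  have hudiff : ∀ z ∈ s, DifferentiableAt ℝ u z := fun z hz =>
    ((heig.1.contDiffAt (hs.mem_nhds hz)).differentiableAt (by norm_num))
  have hA : ∀ z ∈ s, ContDiffAt ℝ 1 (fderiv ℝ u) z := fun z hz =>
    (heig.1.contDiffAt (hs.mem_nhds hz)).fderiv_right (le_refl 2)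
  -- continuity of w
  have hwcont : Continuous (cw μ y) := by
    apply continuous_finset_prod
    intro i _
    exact Real.continuous_cos.comp
      (continuous_const.mul
        ((EuclideanSpace.proj i : EuclideanSpace ℝ (Fin n) →L[ℝ] ℝ).continuous.sub
          continuous_const))
  -- maximize w/u over the cube
  have hψcont : ContinuousOn (fun x => cw μ y x / u x) Q :=
    ContinuousOn.div hwcont.continuousOn (hucont.mono hQs)
      (fun x hx => ne_of_gt (hpos x hx))
  obtain ⟨xs, hxsQ, hmax⟩ := hQcpt.exists_isMaxOn ⟨y, hyQ⟩ hψcont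
  have hwy : cw μ y y = 1 := by simp [cw]
  have hψy : 0 < cw μ y y / u y := by
    rw [hwy]; exact div_pos one_pos (hpos y hyQ)
  -- the max point is interior
  have hstrict : ∀ i, |xs i - y i| < a := by
    intro i
    rcases lt_or_eq_of_le (hxsQ i) with h | h
    · exact h
    · exfalso
      have hcos : Real.cos (μ * (xs i - y i)) = 0 := by
        rcases abs_eq ha0.le |>.1 h with h' | h' <;> rw [h']
        · rw [hμa]; exact Real.cos_pi_div_two
        · rw [mul_neg, hμa, Real.cos_neg]; exact Real.cos_pi_div_two
      have hw0 : cw μ y xs = 0 := Finset.prod_eq_zero (Finset.mem_univ i) hcos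
      have h1 := hmax hyQ
      simp only [hw0, zero_div] at h1
      exact absurd (lt_of_lt_of_le hψy h1) (lt_irrefl 0)
  have hwxs : 0 < cw μ y xs := by
    apply Finset.prod_pos
    intro i _
    apply Real.cos_pos_of_mem_Ioo
    constructor
    · have : |μ * (xs i - y i)| < π / 2 := by
        rw [abs_mul, abs_of_pos hμ, ← hμa]
        exact (mul_lt_mul_iff_right₀ hμ).2 (hstrict i)
      linarith [abs_lt.1 this |>.1]
    · have : |μ * (xs i - y i)| < π / 2 := by
        rw [abs_mul, abs_of_pos hμ, ← hμa]
        exact (mul_lt_mul_iff_right₀ hμ).2 (hstrict i)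
      exact lt_of_le_of_lt (le_abs_self _) this
  have huxs : 0 < u xs := hpos xs hxsQ
  -- the touching function φ
  set φ : EuclideanSpace ℝ (Fin n) → ℝ := fun x => cw μ y xs * u x - u xs * cw μ y x with hφdef
  have hφQ : ∀ x ∈ Q, 0 ≤ φ x := by
    intro x hx
    have h1 : cw μ y x / u x ≤ cw μ y xs / u xs := hmax hx
    have h2 := (div_le_div_iff₀ (hpos x hx) huxs).1 h1
    simp only [hφdef]; nlinarith
  have hφxs : φ xs = 0 := by simp only [hφdef]; ring
  -- φ has a local min at xs
  have hO : IsOpen {x : EuclideanSpace ℝ (Fin n) | ∀ i, |x i - y i| < a} := by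
    have : {x : EuclideanSpace ℝ (Fin n) | ∀ i, |x i - y i| < a}
        = ⋂ i, {x : EuclideanSpace ℝ (Fin n) | |x i - y i| < a} := by
      ext x; simp [Set.mem_iInter]
    rw [this]
    exact isOpen_iInter_of_finite (fun i => isOpen_lt
      (((EuclideanSpace.proj i : EuclideanSpace ℝ (Fin n) →L[ℝ] ℝ).continuous.sub
        continuous_const).abs) continuous_const)
  have hmin : IsLocalMin φ xs := by
    apply Filter.eventually_of_mem (hO.mem_nhds hstrict)
    intro x hx
    rw [hφxs]
    exact hφQ x (fun i => (hx i).le)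
  have hsxs : xs ∈ s := hQs hxsQ
  -- derivative of φ on s
  have hφz : ∀ z ∈ s, HasFDerivAt φ
      (cw μ y xs • fderiv ℝ u z - u xs • fderiv ℝ (cw μ y) z) z := by
    intro z hz
    exact (((hudiff z hz).hasFDerivAt).const_mul (cw μ y xs)).sub
      (((cw_hasFDerivAt μ y z).differentiableAt.hasFDerivAt).const_mul (u xs))
  -- per-direction second derivative inequality
  have hkey : ∀ i : Fin n,
      0 ≤ cw μ y xs * (fderiv ℝ (fun z => fderiv ℝ u z (ee n i)) xs (ee n i))
        - u xs * (-(μ ^ 2) * cw μ y xs) := by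
    intro i
    by_contra hcon
    push_neg at hcon
    set Ai : EuclideanSpace ℝ (Fin n) → ℝ := fun z => fderiv ℝ u z (ee n i) with hAidef
    set Bi : EuclideanSpace ℝ (Fin n) → ℝ := fun z => fderiv ℝ (cw μ y) z (ee n i) with hBidef
    set F : EuclideanSpace ℝ (Fin n) → ℝ := fun z => fderiv ℝ φ z (ee n i) with hFdef
    have hF : ∀ z ∈ s, F z = cw μ y xs * Ai z - u xs * Bi z := by
      intro z hz
      simp only [hFdef, hAidef, hBidef, (hφz z hz).fderiv]
      simp [ContinuousLinearMap.sub_apply]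
    have hAdiff : DifferentiableAt ℝ Ai xs := by
      have h1 : DifferentiableAt ℝ (fderiv ℝ u) xs := (hA xs hsxs).differentiableAt one_ne_zero
      exact h1.clm_apply (differentiableAt_const _)
    have hBieq : Bi = fun z : EuclideanSpace ℝ (Fin n) =>
        -μ * Real.sin (μ * (z i - y i)) * ∏ j ∈ Finset.univ.erase i, Real.cos (μ * (z j - y j)) :=
      funext (fun z => cw_fderiv_apply μ y z i)
    have hBidiff : DifferentiableAt ℝ Bi xs := by
      rw [hBieq]; exact (cwB_hasFDerivAt μ y i xs).differentiableAt
    have hGder : HasFDerivAt (fun z => cw μ y xs * Ai z - u xs * Bi z)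
        (cw μ y xs • fderiv ℝ Ai xs - u xs • fderiv ℝ Bi xs) xs :=
      ((hAdiff.hasFDerivAt).const_mul _).sub ((hBidiff.hasFDerivAt).const_mul _)
    have hFeq : F =ᶠ[nhds xs] (fun z => cw μ y xs * Ai z - u xs * Bi z) := by
      filter_upwards [hs.mem_nhds hsxs] with z hz
      exact hF z hz
    have hFder : HasFDerivAt F (cw μ y xs • fderiv ℝ Ai xs - u xs • fderiv ℝ Bi xs) xs :=
      hGder.congr_of_eventuallyEq hFeq
    -- the line through xs in direction i
    set l : ℝ → EuclideanSpace ℝ (Fin n) := fun t => xs + t • ee n i with hldef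
    have hl : ∀ t, HasDerivAt l (ee n i) t := by
      intro t
      have := ((hasDerivAt_id t).smul_const (ee n i)).const_add xs
      simpa [hldef] using this
    have hl0 : l 0 = xs := by simp [hldef]
    have hlcont : ContinuousAt l 0 := (hl 0).differentiableAt.continuousAt
    -- the restricted functions
    set g : ℝ → ℝ := fun t => φ (l t) with hgdef
    set g' : ℝ → ℝ := fun t => F (l t) with hg'def
    have hsl : ∀ᶠ t in nhds (0 : ℝ), l t ∈ s := by
      have : s ∈ nhds (l 0) := hs.mem_nhds (hl0 ▸ hsxs)
      exact hlcont.preimage_mem_nhds this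
    have hg : ∀ᶠ t in nhds (0 : ℝ), HasDerivAt g (g' t) t := by
      filter_upwards [hsl] with t ht
      have h1 := (hφz (l t) ht).comp_hasDerivAt t (hl t)
      have h2 : g' t = (cw μ y xs • fderiv ℝ u (l t) - u xs • fderiv ℝ (cw μ y) (l t)) (ee n i) := by
        simp only [hg'def, hFdef, (hφz (l t) ht).fderiv]
      rw [h2]
      exact h1
    have hg' : HasDerivAt g'
        ((cw μ y xs • fderiv ℝ Ai xs - u xs • fderiv ℝ Bi xs) (ee n i)) 0 := by
      have hFder' : HasFDerivAt F
          (cw μ y xs • fderiv ℝ Ai xs - u xs • fderiv ℝ Bi xs) (l 0) := by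
        rw [hl0]; exact hFder
      have h := hFder'.comp_hasDerivAt 0 (hl 0)
      exact h
    have h0 : g' 0 = 0 := by
      have hz := hmin.fderiv_eq_zero
      simp only [hg'def, hFdef, hl0, hz]
      simp
    -- the second derivative value, and the contradiction
    have hval : (cw μ y xs • fderiv ℝ Ai xs - u xs • fderiv ℝ Bi xs) (ee n i)
        = cw μ y xs * (fderiv ℝ (fun z => fderiv ℝ u z (ee n i)) xs (ee n i))
          - u xs * (-(μ ^ 2) * cw μ y xs) := by
      rw [ContinuousLinearMap.sub_apply, ContinuousLinearMap.smul_apply,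
        ContinuousLinearMap.smul_apply]
      have hB2 : fderiv ℝ Bi xs (ee n i) = -(μ ^ 2) * cw μ y xs := by
        have := cw_second μ y xs i
        simpa only [hBidef] using this
      rw [hB2]
      rfl
    have hglmin : IsLocalMin g 0 := by
      have h := IsLocalMin.comp_continuous (f := φ) (g := l) (b := (0:ℝ))
        (by rw [hl0]; exact hmin) hlcont
      exact h
    exact second_deriv_contra (hval ▸ hcon) hg hg' h0 hglmin
  -- sum the direction inequalities and contradict the equation
  have hsum : 0 ≤ ∑ i : Fin n,
      (cw μ y xs * (fderiv ℝ (fun z => fderiv ℝ u z (ee n i)) xs (ee n i))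
        - u xs * (-(μ ^ 2) * cw μ y xs)) := Finset.sum_nonneg (fun i _ => hkey i)
  have heq := heig.2 xs hsxs
  have hsumA : ∑ i : Fin n, (fderiv ℝ (fun z => fderiv ℝ u z (ee n i)) xs (ee n i))
      = -(lam * u xs) := by
    simp only [ee]
    linarith [heq]
  have hsplit : (∑ i : Fin n,
      (cw μ y xs * (fderiv ℝ (fun z => fderiv ℝ u z (ee n i)) xs (ee n i))
        - u xs * (-(μ ^ 2) * cw μ y xs)))
      = cw μ y xs * (∑ i : Fin n, (fderiv ℝ (fun z => fderiv ℝ u z (ee n i)) xs (ee n i)))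
        - (n : ℝ) * (u xs * (-(μ ^ 2) * cw μ y xs)) := by
    rw [Finset.sum_sub_distrib, ← Finset.mul_sum, Finset.sum_const, Finset.card_univ]
    simp [nsmul_eq_mul]
  rw [hsplit, hsumA] at hsum
  nlinarith [mul_pos huxs hwxs]

/-- Density of the zero set of an eigenfunction: there are `C₁, λ₀ > 0` depending only on
the ball `B = B(x₀,R)` such that for `λ > λ₀` and any nonzero solution of `Δu + λu = 0`
on `B`, the zero set of `u` is `C₁/√λ`-dense in `B`: every point of `B` at distance more
than `C₁/√λ` from the boundary lies within distance `C₁/√λ` of a zero of `u`. -/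
theorem zero_set_dense (n : ℕ) (x₀ : EuclideanSpace ℝ (Fin n)) (R : ℝ) (hR : 0 < R) :
    ∃ C₁ : ℝ, 0 < C₁ ∧ ∃ lam₀ : ℝ, 0 < lam₀ ∧
      ∀ lam : ℝ, lam₀ < lam →
        ∀ u : EuclideanSpace ℝ (Fin n) → ℝ,
          IsEigenfunctionOn u (ball x₀ R) lam →
          (¬ ∀ x ∈ ball x₀ R, u x = 0) →
          ∀ y ∈ ball x₀ (R - C₁ / Real.sqrt lam),
            ∃ z ∈ ball x₀ R, u z = 0 ∧ dist y z ≤ C₁ / Real.sqrt lam := by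
  refine ⟨4 * (n + 1), by positivity, 1, one_pos, ?_⟩
  intro lam hlam u heig _hnz y hy
  have hlam0 : (0:ℝ) < lam := lt_trans one_pos hlam
  have hsl : 0 < Real.sqrt lam := Real.sqrt_pos.2 hlam0
  have hr : 0 < (4 * ((n:ℝ) + 1)) / Real.sqrt lam := by positivity
  have hyball : y ∈ ball x₀ R := by
    have := mem_ball.1 hy
    rw [mem_ball]
    linarith
  by_cases hn : n = 0
  · subst hn
    refine ⟨y, hyball, ?_, by simpa using hr.le⟩
    have heq := heig.2 y hyball
    simp only [Finset.univ_eq_empty, Finset.sum_empty, zero_add] at heq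
    rcases mul_eq_zero.1 heq with h | h
    · exact absurd h (ne_of_gt hlam0)
    · exact h
  · have hn1 : 1 ≤ (n:ℝ) := by exact_mod_cast Nat.one_le_iff_ne_zero.2 hn
    by_contra hcon
    push_neg at hcon
    set μ := Real.sqrt (lam / (2 * n)) with hμdef
    have h2n : (0:ℝ) < 2 * n := by positivity
    have hμpos : 0 < μ := Real.sqrt_pos.2 (by positivity)
    have hμsq : μ ^ 2 = lam / (2 * n) := Real.sq_sqrt (by positivity)
    have hlt : (n:ℝ) * μ ^ 2 < lam := by
      rw [hμsq]
      have h1 : (n:ℝ) * (lam / (2 * n)) = lam / 2 := by field_simp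
      rw [h1]; linarith
    set a := π / (2 * μ) with hadef
    have ha0 : 0 < a := by rw [hadef]; positivity
    -- geometry: the cube is close to y and inside the big ball
    have hs2n : (0:ℝ) < Real.sqrt (2 * n) := Real.sqrt_pos.2 h2n
    have hμeq : μ = Real.sqrt lam / Real.sqrt (2 * n) := by
      rw [hμdef, Real.sqrt_div hlam0.le]
    have haeq : a = π * Real.sqrt (2 * n) / (2 * Real.sqrt lam) := by
      rw [hadef, hμeq]; field_simp
    have hsqrt2 : Real.sqrt 2 ≤ 2 := by
      nlinarith [Real.sq_sqrt (by norm_num : (0:ℝ) ≤ 2), Real.sqrt_nonneg 2]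
    have hns2n : Real.sqrt n * Real.sqrt (2 * n) = Real.sqrt 2 * n := by
      rw [← Real.sqrt_mul (by positivity)]
      have : (n:ℝ) * (2 * n) = 2 * (n:ℝ)^2 := by ring
      rw [this, Real.sqrt_mul (by norm_num), Real.sqrt_sq (by positivity)]
    have hkeyineq : Real.sqrt n * a ≤ 4 * ((n:ℝ) + 1) / Real.sqrt lam := by
      rw [haeq]
      have hL : Real.sqrt n * (π * Real.sqrt (2*n) / (2 * Real.sqrt lam))
          = (Real.sqrt 2 * n) * π / (2 * Real.sqrt lam) := by
        rw [mul_div_assoc']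
        congr 1
        calc Real.sqrt n * (π * Real.sqrt (2*n)) = (Real.sqrt n * Real.sqrt (2*n)) * π := by ring
          _ = (Real.sqrt 2 * n) * π := by rw [hns2n]
      rw [hL, div_le_div_iff₀ (by positivity) hsl]
      have h2 : Real.sqrt 2 * π ≤ 8 := by
        nlinarith [Real.pi_le_four, hsqrt2, Real.pi_pos, Real.sqrt_nonneg 2]
      have h1 : (Real.sqrt 2 * n) * π ≤ 8 * ((n:ℝ)+1) := by
        nlinarith [h2, hn1, Real.pi_pos, Real.sqrt_nonneg 2]
      calc (Real.sqrt 2 * n) * π * Real.sqrt lam ≤ (8*((n:ℝ)+1)) * Real.sqrt lam :=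
            mul_le_mul_of_nonneg_right h1 hsl.le
        _ = 4*((n:ℝ)+1) * (2 * Real.sqrt lam) := by ring
    have hcube : ∀ x : EuclideanSpace ℝ (Fin n), (∀ i, |x i - y i| ≤ a) →
        dist y x ≤ 4 * ((n:ℝ) + 1) / Real.sqrt lam := by
      intro x hx
      rw [dist_comm]
      exact (cube_dist ha0.le x y hx).trans hkeyineq
    have hQball : ∀ x : EuclideanSpace ℝ (Fin n), (∀ i, |x i - y i| ≤ a) → x ∈ ball x₀ R := by
      intro x hx
      have h1 := hcube x hx
      have h2 : dist y x₀ < R - 4 * ((n:ℝ)+1) / Real.sqrt lam := mem_ball.1 hy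
      rw [mem_ball]
      calc dist x x₀ ≤ dist x y + dist y x₀ := dist_triangle _ _ _
        _ = dist y x + dist y x₀ := by rw [dist_comm]
        _ < R := by linarith
    have hne : ∀ x : EuclideanSpace ℝ (Fin n), (∀ i, |x i - y i| ≤ a) → u x ≠ 0 := by
      intro x hx h0
      exact absurd (hcube x hx) (not_le.2 (hcon x (hQball x hx) h0))
    have hyQ : ∀ i : Fin n, |y i - y i| ≤ a := by intro i; simp [ha0.le]
    -- the cube is convex, hence preconnected
    have hconv : Convex ℝ {x : EuclideanSpace ℝ (Fin n) | ∀ i, |x i - y i| ≤ a} := by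
      intro x hx z hz p q hp hq hpq
      intro i
      have hcoord : (p • x + q • z) i - y i = p * (x i - y i) + q * (z i - y i) := by
        simp only [PiLp.add_apply, PiLp.smul_apply, smul_eq_mul]
        linear_combination (y i) * hpq
      rw [hcoord]
      calc |p * (x i - y i) + q * (z i - y i)|
          ≤ |p * (x i - y i)| + |q * (z i - y i)| := abs_add_le _ _
        _ = p * |x i - y i| + q * |z i - y i| := by
            rw [abs_mul, abs_mul, abs_of_nonneg hp, abs_of_nonneg hq]
        _ ≤ p * a + q * a := by
            have h1 := hx i
            have h2 := hz i
            have := mul_le_mul_of_nonneg_left h1 hp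
            have := mul_le_mul_of_nonneg_left h2 hq
            linarith
        _ = a := by rw [← add_mul, hpq, one_mul]
    have hpre : IsPreconnected {x : EuclideanSpace ℝ (Fin n) | ∀ i, |x i - y i| ≤ a} :=
      hconv.isPreconnected
    -- a positive-on-the-cube eigenfunction gives a contradiction
    have hposcase : ∀ v : EuclideanSpace ℝ (Fin n) → ℝ,
        IsEigenfunctionOn v (ball x₀ R) lam →
        (∀ x : EuclideanSpace ℝ (Fin n), (∀ i, |x i - y i| ≤ a) → v x ≠ 0) →
        0 < v y → False := by
      intro v hv hvne hvy
      have hvpos : ∀ x : EuclideanSpace ℝ (Fin n), (∀ i, |x i - y i| ≤ a) → 0 < v x := by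
        intro x hx
        by_contra hnp
        push_neg at hnp
        have hlt' : v x < 0 := lt_of_le_of_ne hnp (hvne x hx)
        have hiv := hpre.intermediate_value (a := x) (b := y) hx hyQ
          (hv.1.continuousOn.mono (fun w hw => hQball w hw))
        obtain ⟨z, hzQ, hz0⟩ := hiv (Set.mem_Icc.2 ⟨hlt'.le, hvy.le⟩)
        exact hvne z hzQ hz0
      exact key_contra isOpen_ball hμpos hlt hadef y (fun x hx => hQball x hx) hv hvpos
    rcases (hne y hyQ).lt_or_gt with hneg | hposy
    · exact hposcase (fun x => -u x) heig.neg'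
        (fun x hx => neg_ne_zero.2 (hne x hx)) (by simpa using hneg)
    · exact hposcase u heig hne hposy
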